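/- The relation ≠ on an infinite set X is generic, and hence the semi-simplicial set of tuples of pairwise distinct elements of X is boundedly acyclic. -/

import Mathlib

/-- A real-valued function is bounded. -/
def IsBddFun {α : Type*} (f : α → ℝ) : Prop := ∃ C : ℝ, ∀ x, |f x| ≤ C

/-- Tuples pairwise related by `r` in increasing index order. -/
def PairwiseRel {X : Type*} (r : X → X → Prop) {m : ℕ} (f : Fin m → X) : Prop :=
  ∀ i j : Fin m, i < j → r (f i) (f j)

/-- The set `X_n^⊥` of `(n+1)`-tuples pairwise related by `r`. -/
def Splx {X : Type*} (r : X → X → Prop) (n : ℕ) : Type _ :=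
  { f : Fin (n + 1) → X // PairwiseRel r f }

/-- Faces of a simplex. -/
def Splx.face {X : Type*} {r : X → X → Prop} {n : ℕ} (i : Fin (n + 2))
    (σ : Splx r (n + 1)) : Splx r n :=
  ⟨σ.1 ∘ i.succAbove, fun _ _ hab => σ.2 _ _ (Fin.succAbove_lt_succAbove_iff.mpr hab)⟩

/-- The alternating-sum coboundary `ℓ^∞(X_n^⊥) → ℓ^∞(X_{n+1}^⊥)`. -/
noncomputable def scoboundary {X : Type*} {r : X → X → Prop} {n : ℕ}
    (f : Splx r n → ℝ) : Splx r (n + 1) → ℝ :=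
  fun σ => ∑ i : Fin (n + 2), (-1 : ℝ) ^ (i : ℕ) * f (Splx.face i σ)

open Filter
open scoped Classical

section Aux

variable {X : Type*}

/-- The cone on a simplex with apex `x`. -/
def SplxCone {r : X → X → Prop} {m : ℕ} (x : X) (τ : Splx r m)
    (hx : ∀ j, r x (τ.1 j)) : Splx r (m + 1) :=
  ⟨Fin.cons x τ.1, by
    intro i j hij
    rcases Fin.eq_zero_or_eq_succ j with rfl | ⟨j', rfl⟩
    · exact absurd hij (Fin.not_lt_zero _)
    rcases Fin.eq_zero_or_eq_succ i with rfl | ⟨i', rfl⟩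
    · simpa using hx j'
    · simpa using τ.2 i' j' (by simpa using hij)⟩

theorem face_zero_cone {r : X → X → Prop} {n : ℕ} (x : X) (τ : Splx r n)
    (hx : ∀ j, r x (τ.1 j)) :
    Splx.face 0 (SplxCone x τ hx) = τ := by
  apply Subtype.ext
  funext j
  simp [Splx.face, SplxCone, Fin.zero_succAbove]

theorem face_succ_cone {r : X → X → Prop} {n : ℕ} (x : X) (τ : Splx r (n + 1))
    (hx : ∀ j, r x (τ.1 j)) (i : Fin (n + 2)) :
    Splx.face i.succ (SplxCone x τ hx)
      = SplxCone x (Splx.face i τ) (fun j => hx (i.succAbove j)) := by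
  apply Subtype.ext
  funext j
  rcases Fin.eq_zero_or_eq_succ j with rfl | ⟨j', rfl⟩
  · simp [Splx.face, SplxCone, Fin.succ_succAbove_zero]
  · simp [Splx.face, SplxCone, Fin.succ_succAbove_succ, Fin.removeNth_apply]

theorem cocycle_cone {r : X → X → Prop} {n : ℕ} {c : Splx r (n + 1) → ℝ}
    (hc : scoboundary c = 0) (x : X) (σ : Splx r (n + 1)) (hx : ∀ j, r x (σ.1 j)) :
    c σ = ∑ i : Fin (n + 2), (-1 : ℝ) ^ (i : ℕ) *
      c (SplxCone x (Splx.face i σ) (fun j => hx (i.succAbove j))) := by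
  have h := congrFun hc (SplxCone x σ hx)
  simp only [scoboundary, Pi.zero_apply] at h
  rw [Fin.sum_univ_succ, face_zero_cone] at h
  have h2 : ∑ i : Fin (n + 2), (-1 : ℝ) ^ ((i.succ : Fin (n+3)) : ℕ) *
      c (Splx.face i.succ (SplxCone x σ hx))
      = -∑ i : Fin (n + 2), (-1 : ℝ) ^ (i : ℕ) *
      c (SplxCone x (Splx.face i σ) (fun j => hx (i.succAbove j))) := by
    rw [← Finset.sum_neg_distrib]
    apply Finset.sum_congr rfl
    intro i _
    rw [face_succ_cone, Fin.val_succ, pow_succ]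
    ring
  rw [h2] at h
  simp only [Fin.val_zero, pow_zero, one_mul] at h
  linarith

/-- Limit along the hyperfilter on `ℕ`, via choice. -/
noncomputable def limU (g : ℕ → ℝ) : ℝ :=
  if h : ∃ L, Tendsto g (hyperfilter ℕ : Filter ℕ) (nhds L) then h.choose else 0

theorem tendsto_limU {g : ℕ → ℝ} {C : ℝ} (hg : ∀ k, |g k| ≤ C) :
    Tendsto g (hyperfilter ℕ : Filter ℕ) (nhds (limU g)) := by
  have hmem : (↑((hyperfilter ℕ).map g) : Filter ℝ) ≤ Filter.principal (Set.Icc (-C) C) := by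
    rw [le_principal_iff, Ultrafilter.coe_map, mem_map]
    exact univ_mem' fun k => by simpa [Set.mem_Icc, abs_le] using hg k
  obtain ⟨L, -, hL⟩ := isCompact_Icc.ultrafilter_le_nhds ((hyperfilter ℕ).map g) hmem
  rw [Ultrafilter.coe_map] at hL
  have hex : ∃ L, Tendsto g (hyperfilter ℕ : Filter ℕ) (nhds L) := ⟨L, hL⟩
  rw [limU, dif_pos hex]
  exact hex.choose_spec

theorem abs_limU_le {g : ℕ → ℝ} {C : ℝ} (hg : ∀ k, |g k| ≤ C) : |limU g| ≤ C := by
  have h := (tendsto_limU hg).abs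
  exact le_of_tendsto h (Eventually.of_forall hg)

end Aux

/-- on an infinite set, the relation `≠` is generic, hence the semi-simplicial
set of tuples of pairwise distinct elements is boundedly acyclic. -/
theorem ne_generic_boundedly_acyclic {X : Type*} [Infinite X] :
    (∀ F : Finset X, ∃ x : X, ∀ y ∈ F, x ≠ y) ∧
    (∀ (n : ℕ) (c : Splx (fun a b : X => a ≠ b) (n + 1) → ℝ), IsBddFun c →
      scoboundary c = 0 →
      ∃ b : Splx (fun a b : X => a ≠ b) n → ℝ, IsBddFun b ∧ scoboundary b = c) := by
  constructor
  · intro F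
    obtain ⟨x, hx⟩ := Infinite.exists_notMem_finset F
    exact ⟨x, fun y hy h => hx (h ▸ hy)⟩
  · intro n c hbdd hc
    obtain ⟨C, hC⟩ := hbdd
    let e : ℕ ↪ X := Infinite.natEmbedding X
    -- the approximating functions
    let g : Splx (fun a b : X => a ≠ b) n → ℕ → ℝ := fun τ k =>
      if h : ∀ j, e k ≠ τ.1 j then c (SplxCone (e k) τ h) else 0
    have hgbdd : ∀ τ k, |g τ k| ≤ max C 0 := by
      intro τ k
      by_cases h : ∀ j, e k ≠ τ.1 j
      · simp only [g, dif_pos h]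
        exact le_trans (hC _) (le_max_left _ _)
      · simp only [g, dif_neg h, abs_zero]
        exact le_max_right _ _
    -- cofinitely many apexes work for each simplex (any dimension)
    have hcof : ∀ (m : ℕ) (τ : Splx (fun a b : X => a ≠ b) m),
        ∀ᶠ k in (hyperfilter ℕ : Filter ℕ), ∀ j, e k ≠ τ.1 j := by
      intro m τ
      apply mem_hyperfilter_of_finite_compl
      have hsub : {k : ℕ | ∀ j, e k ≠ τ.1 j}ᶜ ⊆ ⋃ j, e ⁻¹' {τ.1 j} := by
        intro k hk
        simp only [Set.mem_compl_iff, Set.mem_setOf_eq, not_forall, not_not] at hk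
        obtain ⟨j, hj⟩ := hk
        exact Set.mem_iUnion.mpr ⟨j, hj⟩
      exact Set.Finite.subset (Set.finite_iUnion fun j =>
        ((Set.finite_singleton (τ.1 j)).preimage e.injective.injOn)) hsub
    refine ⟨fun τ => limU (g τ), ⟨max C 0, fun τ => abs_limU_le (hgbdd τ)⟩, ?_⟩
    funext σ
    have t1 : Tendsto (fun k => ∑ i : Fin (n + 2), (-1 : ℝ) ^ (i : ℕ) * g (Splx.face i σ) k)
        (hyperfilter ℕ : Filter ℕ)
        (nhds (∑ i : Fin (n + 2), (-1 : ℝ) ^ (i : ℕ) * limU (g (Splx.face i σ)))) := by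
      apply tendsto_finset_sum
      intro i _
      exact (tendsto_limU (hgbdd (Splx.face i σ))).const_mul _
    have t2 : Tendsto (fun k => ∑ i : Fin (n + 2), (-1 : ℝ) ^ (i : ℕ) * g (Splx.face i σ) k)
        (hyperfilter ℕ : Filter ℕ) (nhds (c σ)) := by
      apply Tendsto.congr' _ tendsto_const_nhds
      filter_upwards [hcof (n + 1) σ] with k hk
      have := cocycle_cone hc (e k) σ hk
      rw [this]
      apply Finset.sum_congr rfl
      intro i _
      congr 1
      have hki : ∀ j, e k ≠ (Splx.face i σ).1 j := fun j => hk (i.succAbove j)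
      simp only [g, dif_pos hki]
    have := tendsto_nhds_unique t1 t2
    simpa [scoboundary] using this
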